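/- For every positive integer n, the group GL_n(Q) of invertible n×n matrices with rational entries has bounded finite subgroups; that is, there exists a constant B = B(n) such that every finite subgroup of GL_n(Q) has order at most B. -/

import Mathlib

open Matrix Finset

lemma entry_contra {r : ℕ} (p : ℕ) (hp : p.Prime) (k : ℕ) (hk : 1 ≤ k)
    (N : Matrix (Fin r) (Fin r) ℤ) (i j : Fin r)
    (hent : (0:ℤ) = ∑ x ∈ Finset.range (p - 1),
        (p - 1 + 1).choose (x + 1 + 1) • ((3:ℤ) ^ (k * (x + 1 + 1)) * (N ^ (x + 1 + 1)) i j) +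
      (p - 1 + 1) • ((3:ℤ) ^ k * N i j))
    (hN : ¬ (3:ℤ) ∣ N i j) : False := by
  have hp1 : p - 1 + 1 = p := Nat.succ_pred_eq_of_pos hp.pos
  rw [hp1] at hent
  have hT : (p:ℤ) * (3 ^ k * N i j) = -∑ x ∈ Finset.range (p - 1),
      p.choose (x + 1 + 1) • ((3:ℤ) ^ (k * (x + 1 + 1)) * (N ^ (x + 1 + 1)) i j) := by
    rw [← nsmul_eq_mul]; linarith [hent]
  by_cases hp3 : p = 3
  · -- finer estimate mod 3^(k+2)
    subst hp3
    have hdvd : (3:ℤ)^(k+2) ∣ ∑ x ∈ Finset.range 2,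
        (3:ℕ).choose (x + 1 + 1) • ((3:ℤ) ^ (k * (x + 1 + 1)) * (N ^ (x + 1 + 1)) i j) := by
      rw [Finset.sum_range_succ, Finset.sum_range_succ, Finset.sum_range_zero, zero_add]
      refine dvd_add ?_ ?_
      · have e1 : (3:ℕ).choose (0 + 1 + 1) • ((3:ℤ) ^ (k * (0 + 1 + 1)) * (N ^ (0 + 1 + 1)) i j)
            = 3 ^ (k * 2 + 1) * (N ^ 2) i j := by
          norm_num [Nat.choose]; ring
        rw [e1]
        exact Dvd.dvd.mul_right (pow_dvd_pow 3 (by omega)) _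
      · have e2 : (3:ℕ).choose (1 + 1 + 1) • ((3:ℤ) ^ (k * (1 + 1 + 1)) * (N ^ (1 + 1 + 1)) i j)
            = 3 ^ (k * 3) * (N ^ 3) i j := by
          norm_num [Nat.choose]
        rw [e2]
        exact Dvd.dvd.mul_right (pow_dvd_pow 3 (by omega)) _
    simp only [show 3-1=2 from rfl] at hT
    have hdvd' := dvd_neg.2 hdvd
    rw [← hT] at hdvd'
    have h2 : (3:ℤ)^(k+1) * 3 ∣ (3:ℤ)^(k+1) * N i j := by
      rw [← pow_succ]
      calc (3:ℤ)^(k+2) ∣ ((3:ℕ):ℤ) * (3 ^ k * N i j) := hdvd'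
      _ = 3^(k+1) * N i j := by push_cast; ring
    have h3 : (3:ℤ) ∣ N i j :=
      (mul_dvd_mul_iff_left (pow_ne_zero (k+1) (by norm_num : (3:ℤ) ≠ 0))).1 h2
    exact hN h3
  · -- coarse estimate mod 3^(k+1)
    have hdvd : (3:ℤ)^(k+1) ∣ ∑ x ∈ Finset.range (p - 1),
        p.choose (x + 1 + 1) • ((3:ℤ) ^ (k * (x + 1 + 1)) * (N ^ (x + 1 + 1)) i j) := by
      refine Finset.dvd_sum fun x _ => ?_
      rw [nsmul_eq_mul]
      exact Dvd.dvd.mul_left (Dvd.dvd.mul_right (pow_dvd_pow 3 (by nlinarith)) _) _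
    have hdvd' := dvd_neg.2 hdvd
    rw [← hT] at hdvd'
    have h2 : (3:ℤ)^k * 3 ∣ (3:ℤ)^k * ((p:ℤ) * N i j) := by
      rw [← pow_succ]
      calc (3:ℤ)^(k+1) ∣ (p:ℤ) * (3 ^ k * N i j) := hdvd'
      _ = 3^k * ((p:ℤ) * N i j) := by ring
    have h3 : (3:ℤ) ∣ (p:ℤ) * N i j :=
      (mul_dvd_mul_iff_left (pow_ne_zero k (by norm_num : (3:ℤ) ≠ 0))).1 h2
    rcases (Int.prime_three.dvd_mul.1 h3) with h | h
    · have h' : (3:ℕ) ∣ p := by exact_mod_cast h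
      exact hp3 ((Nat.prime_dvd_prime_iff_eq Nat.prime_three hp).1 h').symm
    · exact hN h

lemma mink_prime {r : ℕ} (p : ℕ) (hp : p.Prime) (A : Matrix (Fin r) (Fin r) ℤ)
    (h3 : A.map (Int.cast : ℤ → ZMod 3) = 1) (hAp : A ^ p = 1) : A = 1 := by
  classical
  by_contra hne
  set M : Matrix (Fin r) (Fin r) ℤ := A - 1 with hMdef
  have hM0 : M ≠ 0 := sub_ne_zero.2 hne
  have hdvd : ∀ i j, (3:ℤ) ∣ M i j := by
    intro i j
    have h := congrFun (congrFun h3 i) j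
    simp only [Matrix.map_apply, Matrix.one_apply] at h
    have hz : ((M i j : ℤ) : ZMod 3) = 0 := by
      simp only [hMdef, Matrix.sub_apply, Matrix.one_apply]
      push_cast
      rw [h]
      split_ifs <;> simp
    exact_mod_cast (ZMod.intCast_zmod_eq_zero_iff_dvd _ 3).1 hz
  obtain ⟨i0, j0, hij0⟩ : ∃ i j, M i j ≠ 0 := by
    by_contra hc
    push_neg at hc
    exact hM0 (Matrix.ext fun i j => hc i j)
  set P : ℕ → Prop := fun k => ∀ i j, (3:ℤ)^k ∣ M i j with hPdef
  have hP1 : P 1 := by intro i j; simpa using hdvd i j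
  have hmono : ∀ k, P (k+1) → P k := fun k h i j =>
    dvd_trans (pow_dvd_pow 3 (Nat.le_succ k)) (h i j)
  have hPex : ∃ v, ¬ P v := by
    refine ⟨(M i0 j0).natAbs, fun hv => ?_⟩
    have h1 : (3:ℕ)^(M i0 j0).natAbs ∣ (M i0 j0).natAbs := by
      have := hv i0 j0
      have h := Int.natAbs_dvd_natAbs.2 this
      rw [Int.natAbs_pow] at h
      exact h
    have h2 : (M i0 j0).natAbs < 3^(M i0 j0).natAbs := Nat.lt_pow_self (by norm_num)
    have h3' : 0 < (M i0 j0).natAbs := Int.natAbs_pos.2 hij0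
    exact absurd (Nat.le_of_dvd h3' h1) (not_le.2 h2)
  obtain ⟨k, hk1, hPk, hPk1⟩ : ∃ k, 1 ≤ k ∧ P k ∧ ¬ P (k+1) := by
    let k' := Nat.find hPex
    have hk' : ¬ P k' := Nat.find_spec hPex
    have h2 : 2 ≤ k' := by
      by_contra h
      interval_cases k'
      · exact hk' (hmono 0 hP1)
      · exact hk' hP1
    refine ⟨k' - 1, by omega, ?_, ?_⟩
    · have := Nat.find_min hPex (m := k' - 1) (by omega)
      simpa using not_not.1 this
    · have h : k' - 1 + 1 = k' := by omega
      rw [h]; exact hk'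
  -- extract N
  set N : Matrix (Fin r) (Fin r) ℤ := Matrix.of (fun i j => M i j / 3^k) with hNdef
  have hMN : M = (3:ℤ)^k • N := by
    ext i j
    simp only [hNdef, Matrix.smul_apply, Matrix.of_apply, smul_eq_mul]
    exact (Int.mul_ediv_cancel' (hPk i j)).symm
  obtain ⟨i, j, hNij⟩ : ∃ i j, ¬ (3:ℤ) ∣ N i j := by
    by_contra hc
    push_neg at hc
    refine hPk1 fun i j => ?_
    have : M i j = 3^k * N i j := by rw [hMN]; simp
    rw [this, pow_succ]
    exact mul_dvd_mul (dvd_refl _) (hc i j)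
  -- the power identity
  have hA1 : A = 1 + (3:ℤ)^k • N := by rw [← hMN, hMdef]; abel
  set X : Matrix (Fin r) (Fin r) ℤ := (3:ℤ)^k • N with hX
  have key : (1 : Matrix (Fin r) (Fin r) ℤ) = ∑ m ∈ range (p+1), p.choose m • X ^ m := by
    calc (1 : Matrix (Fin r) (Fin r) ℤ) = (X + 1) ^ p := by
          rw [add_comm]; rw [hA1] at hAp; exact hAp.symm
    _ = ∑ m ∈ range (p+1), X ^ m * 1 ^ (p - m) * (p.choose m : Matrix (Fin r) (Fin r) ℤ) :=
        (Commute.one_right X).add_pow p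
    _ = _ := by
        refine Finset.sum_congr rfl fun m _ => ?_
        rw [one_pow, mul_one, ← (Nat.cast_commute (p.choose m) (X ^ m)).eq, nsmul_eq_mul]
  rw [Finset.sum_range_succ'] at key
  simp only [pow_zero, Nat.choose_zero_right, one_smul] at key
  have key2 : (0 : Matrix (Fin r) (Fin r) ℤ) = ∑ m ∈ range p, p.choose (m+1) • X ^ (m+1) := by
    nth_rewrite 1 [← zero_add (1 : Matrix (Fin r) (Fin r) ℤ)] at key
    exact add_right_cancel key
  have hp1 : p = (p - 1) + 1 := (Nat.succ_pred_eq_of_pos hp.pos).symm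
  rw [hp1, Finset.sum_range_succ'] at key2
  simp only [zero_add, pow_one, Nat.choose_one_right] at key2
  have hent := congrFun (congrFun key2 i) j
  rw [Matrix.add_apply, Matrix.sum_apply] at hent
  simp only [Matrix.zero_apply, Matrix.smul_apply, smul_eq_mul, hX, smul_pow,
    Matrix.smul_apply, smul_eq_mul, ← pow_mul] at hent

  exact entry_contra p hp k hk1 N i j hent hNij

lemma mink {r : ℕ} (A : Matrix (Fin r) (Fin r) ℤ)
    (h3 : A.map (Int.cast : ℤ → ZMod 3) = 1) :
    ∀ m, 0 < m → A ^ m = 1 → A = 1 := by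
  intro m
  induction m using Nat.strong_induction_on with
  | _ m ih =>
    intro hm hAm
    by_cases h1 : m = 1
    · subst h1; simpa using hAm
    · set p := m.minFac with hpdef
      have hp : p.Prime := Nat.minFac_prime h1
      have hpdvd : p ∣ m := Nat.minFac_dvd m
      have hB3 : (A ^ (m / p)).map (Int.cast : ℤ → ZMod 3) = 1 := by
        have h := map_pow ((Int.castRingHom (ZMod 3)).mapMatrix) A (m / p)
        simp only [RingHom.mapMatrix_apply] at h
        rw [show ((Int.castRingHom (ZMod 3)) : ℤ → ZMod 3) = (Int.cast : ℤ → ZMod 3) from rfl] at h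
        rw [h, h3, one_pow]
      have hBp : (A ^ (m / p)) ^ p = 1 := by
        rw [← pow_mul, Nat.div_mul_cancel hpdvd]; exact hAm
      have hB : A ^ (m / p) = 1 := mink_prime p hp _ hB3 hBp
      have hlt : m / p < m := Nat.div_lt_self hm hp.one_lt
      have hpos : 0 < m / p := Nat.div_pos (Nat.le_of_dvd hm hpdvd) hp.pos
      exact ih (m / p) hlt hpos hB

/-- For every positive integer `n`, the group `GL_n(ℚ)` has bounded finite subgroups. -/
theorem GL_rat_bounded_finite_subgroups (n : ℕ) (hn : 0 < n) :
    ∃ B : ℕ, ∀ G : Subgroup (GL (Fin n) ℚ), Finite G → Nat.card G ≤ B := by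
  classical
  refine ⟨3 ^ (n * n), fun G hG => ?_⟩
  set V := (Fin n → ℚ) with hV
  let e : GL (Fin n) ℚ →* (V ≃ₗ[ℚ] V) :=
    (LinearMap.GeneralLinearGroup.generalLinearEquiv ℚ V).toMonoidHom.comp
      Matrix.GeneralLinearGroup.toLin.toMonoidHom
  have he_inj : Function.Injective e :=
    (LinearMap.GeneralLinearGroup.generalLinearEquiv ℚ V).injective.comp
      Matrix.GeneralLinearGroup.toLin.injective
  let a : G →* (V ≃ₗ[ℚ] V) := e.comp G.subtype
  have ha_inj : Function.Injective a := he_inj.comp Subtype.val_injective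
  -- the lattice
  set S : Set V := ⋃ g : G, Set.range (fun i : Fin n => a g (Pi.single i 1)) with hS
  have hSfin : S.Finite := Set.finite_iUnion fun g => Set.finite_range _
  set L : Submodule ℤ V := Submodule.span ℤ S with hL
  have hbasis : ∀ i : Fin n, Pi.single i (1:ℚ) ∈ L := by
    intro i
    apply Submodule.subset_span
    refine Set.mem_iUnion.2 ⟨1, ⟨i, ?_⟩⟩
    simp [a]
  -- stability
  have hstab1 : ∀ g : G, L.map ((a g).restrictScalars ℤ : V →ₗ[ℤ] V) ≤ L := by
    intro g
    rw [hL, Submodule.map_span]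
    apply Submodule.span_mono
    rintro x ⟨y, hy, rfl⟩
    obtain ⟨h, i, rfl⟩ := Set.mem_iUnion.1 hy
    have heq : (a g) ((a h) (Pi.single i 1)) = (a (g*h)) (Pi.single i 1) := by
      rw [_root_.map_mul]; rfl
    show ((a g).restrictScalars ℤ) ((a h) (Pi.single i 1)) ∈ S
    refine Set.mem_iUnion.2 ⟨g*h, ⟨i, ?_⟩⟩
    exact heq.symm
  have hstab : ∀ g : G, L.map ((a g).restrictScalars ℤ : V →ₗ[ℤ] V) = L := by
    intro g
    refine le_antisymm (hstab1 g) ?_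
    have h2 := Submodule.map_mono (f := ((a g).restrictScalars ℤ : V →ₗ[ℤ] V)) (hstab1 g⁻¹)
    rw [← Submodule.map_comp] at h2
    have hcomp : (((a g).restrictScalars ℤ : V →ₗ[ℤ] V).comp
        ((a g⁻¹).restrictScalars ℤ : V →ₗ[ℤ] V)) = LinearMap.id := by
      refine LinearMap.ext fun x => ?_
      show (a g) ((a g⁻¹) x) = x
      rw [map_inv]
      show (a g) ((a g).symm x) = x
      exact (a g).apply_symm_apply x
    rw [hcomp, Submodule.map_id] at h2
    exact h2
  -- the action on L
  let ρ : G →* (L ≃ₗ[ℤ] L) := MonoidHom.mk'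
    (fun g => ((a g).restrictScalars ℤ).ofSubmodules L L (hstab g))
    (by
      intro g h
      apply LinearEquiv.ext
      intro x
      apply Subtype.ext
      show ((a (g*h)) (x:V) : V) = (((a g).restrictScalars ℤ).ofSubmodules L L (hstab g)
        ((((a h).restrictScalars ℤ).ofSubmodules L L (hstab h)) x) : V)
      rw [LinearEquiv.ofSubmodules_apply, LinearEquiv.ofSubmodules_apply]
      rw [_root_.map_mul]
      rfl)
  have hρ_inj : Function.Injective ρ := by
    rw [injective_iff_map_eq_one]
    intro g hg
    have hfix : ∀ i : Fin n, a g (Pi.single i 1) = Pi.single i (1:ℚ) := by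
      intro i
      have := congrArg (fun (f : L ≃ₗ[ℤ] L) => ((f ⟨Pi.single i 1, hbasis i⟩ : L) : V)) hg
      simpa [ρ] using this
    have hone : a g = 1 := by
      have h1 : ((a g) : V →ₗ[ℚ] V) = LinearMap.id := by
        apply (Pi.basisFun ℚ (Fin n)).ext
        intro i
        simpa using hfix i
      apply LinearEquiv.toLinearMap_injective
      rw [h1, LinearEquiv.coe_toLinearMap_one]
    exact ha_inj (hone.trans (_root_.map_one a).symm)
  -- L is finite free of rank ≤ n
  have hLfin : Module.Finite ℤ L := Module.Finite.span_of_finite ℤ hSfin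
  have hLfree : Module.Free ℤ L := Module.free_of_finite_type_torsion_free'
  set r := Module.finrank ℤ L with hr
  let b : Module.Basis (Fin r) ℤ L := Module.finBasis ℤ L
  have hrn : r ≤ n := by
    have hli : LinearIndependent ℤ (fun i => ((b i : L) : V)) :=
      b.linearIndependent.map' L.subtype L.ker_subtype
    have hliQ : LinearIndependent ℚ (fun i => ((b i : L) : V)) :=
      (LinearIndependent.iff_fractionRing ℤ ℚ).1 hli
    have h5 := hliQ.fintype_card_le_finrank
    have h6 : Module.finrank ℚ V = n := Module.finrank_fin_fun ℚ
    simpa [h6] using h5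
  -- maps to matrices
  let m1 : (L ≃ₗ[ℤ] L) ≃* (Matrix (Fin r) (Fin r) ℤ)ˣ :=
    (LinearMap.GeneralLinearGroup.generalLinearEquiv ℤ L).symm.trans
      (Units.mapEquiv (LinearMap.toMatrixAlgEquiv b).toRingEquiv.toMulEquiv)
  let π : (Matrix (Fin r) (Fin r) ℤ)ˣ →* (Matrix (Fin r) (Fin r) (ZMod 3))ˣ :=
    Units.map ((Int.castRingHom (ZMod 3)).mapMatrix : Matrix (Fin r) (Fin r) ℤ →+* _).toMonoidHom
  let Ψ : G →* (Matrix (Fin r) (Fin r) (ZMod 3))ˣ := π.comp (m1.toMonoidHom.comp ρ)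
  have hΨ_inj : Function.Injective Ψ := by
    rw [injective_iff_map_eq_one]
    intro g hg
    set A : (Matrix (Fin r) (Fin r) ℤ)ˣ := m1 (ρ g) with hA
    have hA3 : (A : Matrix (Fin r) (Fin r) ℤ).map (Int.cast : ℤ → ZMod 3) = 1 := by
      have h := congrArg Units.val hg
      simpa [Ψ, π] using h
    have hApow : (A : Matrix (Fin r) (Fin r) ℤ) ^ (Nat.card G) = 1 := by
      have h1 : A ^ (Nat.card G) = 1 := by
        rw [hA, ← _root_.map_pow, ← _root_.map_pow, pow_card_eq_one', _root_.map_one, _root_.map_one]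
      rw [← Units.val_pow_eq_pow_val, h1, Units.val_one]
    have hcard : 0 < Nat.card G := Nat.card_pos
    have hA1 : (A : Matrix (Fin r) (Fin r) ℤ) = 1 := mink _ hA3 _ hcard hApow
    have : ρ g = 1 := m1.injective (by rw [_root_.map_one]; exact Units.ext hA1)
    exact hρ_inj (this.trans (_root_.map_one ρ).symm)
  -- counting
  have h1 : Nat.card G ≤ Nat.card (Matrix (Fin r) (Fin r) (ZMod 3))ˣ :=
    Nat.card_le_card_of_injective Ψ hΨ_inj
  have h2 : Nat.card (Matrix (Fin r) (Fin r) (ZMod 3))ˣ ≤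
      Nat.card (Matrix (Fin r) (Fin r) (ZMod 3)) :=
    Nat.card_le_card_of_injective Units.val (fun _ _ h => Units.ext h)
  have h3 : Nat.card (Matrix (Fin r) (Fin r) (ZMod 3)) = 3 ^ (r * r) := by
    rw [Nat.card_eq_fintype_card]
    rw [show Fintype.card (Matrix (Fin r) (Fin r) (ZMod 3))
        = Fintype.card (Fin r → Fin r → ZMod 3) from rfl]
    simp [Fintype.card_fun, pow_mul]
  calc Nat.card G ≤ Nat.card (Matrix (Fin r) (Fin r) (ZMod 3)) := h1.trans h2
  _ = 3 ^ (r * r) := h3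
  _ ≤ 3 ^ (n * n) := Nat.pow_le_pow_right (by norm_num) (Nat.mul_le_mul hrn hrn)
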